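/- arXiv:math/9909047 — 4 statements merged into one kernel-verified Lean document; each statement's English description precedes it below -/
import Mathlib

section
/- Let A be a bounded normal operator on a complex Hilbert space such that for every complex number λ, the operator A + λI is a complex scalar multiple of a positive operator. Then A is a scalar multiple of the identity. -/
theorem stmt_1
    {H : Type*} [NormedAddCommGroup H] [InnerProductSpace ℂ H] [CompleteSpace H]
    (A : H →L[ℂ] H) (hA : IsStarNormal A)
    (h : ∀ lam : ℂ, ∃ (c : ℂ) (P : H →L[ℂ] H), P.IsPositive ∧
      A + lam • (1 : H →L[ℂ] H) = c • P) :
    ∃ c : ℂ, A = c • (1 : H →L[ℂ] H) := by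
  by_cases h1 : (1 : H →L[ℂ] H) = 0
  · exact ⟨0, by rw [← mul_one A, h1, mul_zero, zero_smul]⟩
  have key : ∀ lam : ℂ, (∃ mu : ℂ, A = mu • (1 : H →L[ℂ] H)) ∨
      ∃ mu : ℂ, star A + (starRingEnd ℂ lam) • (1 : H →L[ℂ] H)
        = mu • A + (mu * lam) • (1 : H →L[ℂ] H) := by
    intro lam
    obtain ⟨c, P, hP, hEq⟩ := h lam
    by_cases hc : c = 0
    · left
      refine ⟨-lam, ?_⟩
      have : A + lam • (1 : H →L[ℂ] H) = 0 := by rw [hEq, hc, zero_smul]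
      have := eq_neg_of_add_eq_zero_left this
      rw [this, neg_smul]
    · right
      refine ⟨starRingEnd ℂ c / c, ?_⟩
      have hsa : star P = P := hP.isSelfAdjoint
      have h2 : star A + (starRingEnd ℂ lam) • (1 : H →L[ℂ] H) = (starRingEnd ℂ c) • P := by
        have := congrArg star hEq
        rwa [star_add, star_smul, star_smul, star_one, hsa, ← starRingEnd_apply,
          ← starRingEnd_apply] at this
      have h3 : (starRingEnd ℂ c) • P = (starRingEnd ℂ c / c) • (A + lam • (1 : H →L[ℂ] H)) := by
        rw [hEq, smul_smul, div_mul_cancel₀ _ hc]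
      rw [h2, h3, smul_add, smul_smul]
  rcases key 0 with h0 | ⟨mu0, e0⟩
  · exact h0
  rcases key 1 with h1' | ⟨mu1, e1⟩
  · exact h1'
  rcases key Complex.I with hi | ⟨mui, ei⟩
  · exact hi
  simp only [map_zero, zero_smul, mul_zero, add_zero] at e0
  simp only [map_one, one_smul, mul_one] at e1
  rw [e0] at e1 ei
  have d1 : (mu0 - mu1) • A = (mu1 - 1) • (1 : H →L[ℂ] H) := by
    linear_combination (norm := module) e1
  have di : (mu0 - mui) • A = (mui * Complex.I - starRingEnd ℂ Complex.I) • (1 : H →L[ℂ] H) := by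
    linear_combination (norm := module) ei
  by_cases hd : mu0 = mu1
  · by_cases hdi : mu0 = mui
    · exfalso
      rw [hd, sub_self, zero_smul] at d1
      rw [hdi, sub_self, zero_smul] at di
      have hmu1 : mu1 = 1 := sub_eq_zero.mp ((smul_eq_zero.mp d1.symm).resolve_right h1)
      have hI : mui * Complex.I - starRingEnd ℂ Complex.I = 0 :=
        (smul_eq_zero.mp di.symm).resolve_right h1
      rw [Complex.conj_I, sub_neg_eq_add] at hI
      have hmui : mui = -1 := by
        rcases mul_eq_zero.mp (by linear_combination hI : (mui + 1) * Complex.I = 0) with h' | h'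
        · exact eq_neg_of_add_eq_zero_left h'
        · exact absurd h' Complex.I_ne_zero
      have : (1 : ℂ) = -1 := by linear_combination -hmu1 + hmui - hd + hdi
      norm_num at this
    · refine ⟨(mu0 - mui)⁻¹ * (mui * Complex.I - starRingEnd ℂ Complex.I), ?_⟩
      have hne : mu0 - mui ≠ 0 := sub_ne_zero.mpr hdi
      rw [← smul_smul, ← di, smul_smul, inv_mul_cancel₀ hne, one_smul]
  · refine ⟨(mu0 - mu1)⁻¹ * (mu1 - 1), ?_⟩
    have hne : mu0 - mu1 ≠ 0 := sub_ne_zero.mpr hd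
    rw [← smul_smul, ← d1, smul_smul, inv_mul_cancel₀ hne, one_smul]
end

section
/- Let A be a bounded normal operator on a complex nontrivial Hilbert space with the property that for every complex λ, the spectrum of A + λI lies on a straight line through the origin in ℂ. Then the spectrum of A is a singleton, and hence A is a scalar multiple of the identity. -/
theorem stmt_2
    {H : Type*} [NormedAddCommGroup H] [InnerProductSpace ℂ H] [CompleteSpace H]
    [Nontrivial H]
    (A : H →L[ℂ] H) (hA : IsStarNormal A)
    (h : ∀ lam : ℂ, ∃ z : ℂ,
      spectrum ℂ (A + lam • (1 : H →L[ℂ] H)) ⊆ {w : ℂ | ∃ t : ℝ, w = t • z}) :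
    ∃ mu : ℂ, spectrum ℂ A = {mu} ∧ A = mu • (1 : H →L[ℂ] H) := by
  haveI := hA
  obtain ⟨mu, hmu⟩ := spectrum.nonempty A
  -- key: any two spectrum points are equal
  have key : ∀ a b : ℂ, a ∈ spectrum ℂ A → b ∈ spectrum ℂ A → a = b := by
    intro a b ha hb
    have mem : ∀ (lam : ℂ) (w : ℂ), w ∈ spectrum ℂ A →
        w + lam ∈ spectrum ℂ (A + lam • (1 : H →L[ℂ] H)) := by
      intro lam w hw
      have : lam • (1 : H →L[ℂ] H) = algebraMap ℂ (H →L[ℂ] H) lam := by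
        simp [Algebra.algebraMap_eq_smul_one]
      rw [this, ← spectrum.add_singleton_eq]
      exact Set.add_mem_add hw rfl
    have coll : ∀ lam : ℂ, a + lam ≠ 0 → ∃ r : ℝ, b + lam = r * (a + lam) := by
      intro lam hne
      obtain ⟨z, hz⟩ := h lam
      obtain ⟨t1, ht1⟩ := hz (mem lam a ha)
      obtain ⟨t2, ht2⟩ := hz (mem lam b hb)
      have ht1ne : (t1 : ℂ) ≠ 0 := by
        intro h0
        apply hne
        rw [ht1, Complex.real_smul, h0, zero_mul]
      refine ⟨t2 / t1, ?_⟩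
      rw [ht1, ht2, Complex.real_smul, Complex.real_smul]
      push_cast
      field_simp
    -- use lam = 1 - a : points 1 and 1 + (b-a)
    obtain ⟨r1, hr1⟩ := coll (1 - a) (by simp)
    obtain ⟨r2, hr2⟩ := coll (Complex.I - a) (by simp [Complex.I_ne_zero])
    have e1 : b - a = (r1 : ℂ) - 1 := by
      have : b + (1 - a) = r1 * (a + (1 - a)) := hr1
      simp at this
      linear_combination this
    have e2 : b - a = ((r2 : ℂ) - 1) * Complex.I := by
      have : b + (Complex.I - a) = r2 * (a + (Complex.I - a)) := hr2
      simp at this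
      linear_combination this
    have him : (b - a).im = 0 := by rw [e1]; simp
    have hre : (b - a).re = 0 := by rw [e2]; simp
    have : b - a = 0 := Complex.ext hre him
    exact (sub_eq_zero.mp this).symm
  have hspec : spectrum ℂ A = {mu} := by
    ext w
    simp only [Set.mem_singleton_iff]
    exact ⟨fun hw => key w mu hw hmu, fun hw => hw ▸ hmu⟩
  refine ⟨mu, hspec, ?_⟩
  have : A = cfc (id : ℂ → ℂ) A := (cfc_id ℂ A).symm
  rw [this, cfc_congr (f := id) (g := fun _ => mu) (by intro x hx; rw [hspec] at hx; simpa using hx),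
    cfc_const mu A]
  simp [Algebra.algebraMap_eq_smul_one]
end

section
/- Let X be a compact Hausdorff space and let φ : C(X,ℂ) → ℂ be a continuous linear functional such that φ(1) = 1 and for every f ∈ C(X,ℂ), φ(f) belongs to the range of f. Then φ is multiplicative, i.e., φ(fg) = φ(f)φ(g) for all f, g, and hence φ is evaluation at some point of X. -/
noncomputable def sinC {X : Type*} [TopologicalSpace X] (f : C(X, ℂ)) : C(X, ℂ) :=
  ⟨fun y => Complex.sin (f y), Complex.continuous_sin.comp f.continuous⟩

noncomputable def cosC {X : Type*} [TopologicalSpace X] (f : C(X, ℂ)) : C(X, ℂ) :=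
  ⟨fun y => Complex.cos (f y), Complex.continuous_cos.comp f.continuous⟩

@[simp] lemma sinC_apply {X : Type*} [TopologicalSpace X] (f : C(X, ℂ)) (y : X) :
    sinC f y = Complex.sin (f y) := rfl
@[simp] lemma cosC_apply {X : Type*} [TopologicalSpace X] (f : C(X, ℂ)) (y : X) :
    cosC f y = Complex.cos (f y) := rfl

lemma sin_sub_self_bound {s : ℝ} (hs : |s| ≤ 1) : |Real.sin s - s| ≤ |s| ^ 3 := by
  have h := Real.sin_bound hs
  have h2 : |s| ^ 4 ≤ |s| ^ 3 := by
    calc |s| ^ 4 = |s| ^ 3 * |s| := by ring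
    _ ≤ |s| ^ 3 * 1 := by
        have : (0:ℝ) ≤ |s| ^ 3 := by positivity
        nlinarith
    _ = |s| ^ 3 := by ring
  have h3 : |s ^ 3 / 6| ≤ |s| ^ 3 / 6 := by rw [abs_div, abs_pow]; simp
  calc |Real.sin s - s| = |(Real.sin s - (s - s ^ 3 / 6)) + (- (s ^3 / 6))| := by ring_nf
    _ ≤ |Real.sin s - (s - s ^ 3 / 6)| + |(- (s^3 / 6))| := abs_add_le _ _
    _ ≤ |s| ^ 4 * (5/96) + |s|^3/6 := by rw [abs_neg]; exact add_le_add (h.trans (by have := mul_le_mul_of_nonneg_left hs (pow_nonneg (abs_nonneg s) 4); nlinarith [pow_nonneg (abs_nonneg s) 4])) h3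
    _ ≤ |s| ^ 3 := by nlinarith [pow_nonneg (abs_nonneg s) 3]

set_option maxHeartbeats 1600000 in
theorem stmt_4
    {X : Type*} [TopologicalSpace X] [CompactSpace X] [T2Space X]
    (phi : C(X, ℂ) →L[ℂ] ℂ)
    (h1 : phi 1 = 1)
    (hrange : ∀ f : C(X, ℂ), phi f ∈ Set.range f) :
    (∀ f g : C(X, ℂ), phi (f * g) = phi f * phi g) ∧
      ∃ x : X, ∀ f : C(X, ℂ), phi f = f x := by
  classical
  obtain ⟨y₀, -⟩ := hrange 1
  haveI : Nonempty X := ⟨y₀⟩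
  set P : C(X, ℂ) → Prop := fun w => phi w = 0 ∧ ∀ y, (w y).im = 0 ∧ 0 ≤ (w y).re with hPdef
  haveI : Nonempty {w : C(X, ℂ) // P w} := ⟨⟨0, by simp [hPdef], fun y => by simp⟩⟩
  set Z : {w : C(X, ℂ) // P w} → Set X := fun w => {y | w.1 y = 0} with hZdef
  have hZmem : (⋂ w, Z w).Nonempty := by
    apply IsCompact.nonempty_iInter_of_directed_nonempty_isCompact_isClosed
    · rintro ⟨w₁, hw₁⟩ ⟨w₂, hw₂⟩
      refine ⟨⟨w₁ + w₂, ?_, ?_⟩, ?_, ?_⟩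
      · simp [hPdef, hw₁.1, hw₂.1]
      · intro y
        have h1 := hw₁.2 y
        have h2 := hw₂.2 y
        simp only [ContinuousMap.add_apply, Complex.add_im, Complex.add_re]
        constructor
        · rw [h1.1, h2.1]; ring
        · linarith [h1.2, h2.2]
      · intro y hy
        simp only [hZdef, Set.mem_setOf_eq, ContinuousMap.add_apply] at hy ⊢
        have h1 := hw₁.2 y
        have h2 := hw₂.2 y
        have hre : (w₁ y).re + (w₂ y).re = 0 := by
          have := congrArg Complex.re hy; simpa using this
        have : (w₁ y).re = 0 := by linarith [h1.2, h2.2]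
        exact Complex.ext this h1.1
      · intro y hy
        simp only [hZdef, Set.mem_setOf_eq, ContinuousMap.add_apply] at hy ⊢
        have h1 := hw₁.2 y
        have h2 := hw₂.2 y
        have hre : (w₁ y).re + (w₂ y).re = 0 := by
          have := congrArg Complex.re hy; simpa using this
        have : (w₂ y).re = 0 := by linarith [h1.2, h2.2]
        exact Complex.ext this h2.1
    · rintro ⟨w, hw⟩
      obtain ⟨y, hy⟩ := hrange w
      exact ⟨y, by simp [hZdef, hy, hw.1]⟩
    · rintro ⟨w, hw⟩
      exact (isClosed_eq w.continuous continuous_const).isCompact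
    · rintro ⟨w, hw⟩
      exact isClosed_eq w.continuous continuous_const
  obtain ⟨x, hx⟩ := hZmem
  have hxZ : ∀ w : C(X, ℂ), P w → w x = 0 := by
    intro w hw
    have := Set.mem_iInter.mp hx ⟨w, hw⟩
    simpa [hZdef] using this
  have key : ∀ u : C(X, ℂ), (∀ y, (u y).im = 0) →
      Complex.cos (u x) = phi (cosC u) ∧ Complex.sin (u x) = phi (sinC u) := by
    intro u hu
    set a := phi (cosC u) with ha
    set b := phi (sinC u) with hb
    have hureal : ∀ y, u y = ((u y).re : ℂ) := fun y => Complex.ext (by simp) (by simp [hu y])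
    have hcosy : ∀ y, Complex.cos (u y) = ((Real.cos (u y).re : ℝ) : ℂ) := by
      intro y; conv_lhs => rw [hureal y]
      exact (Complex.ofReal_cos _).symm
    have hsiny : ∀ y, Complex.sin (u y) = ((Real.sin (u y).re : ℝ) : ℂ) := by
      intro y; conv_lhs => rw [hureal y]
      exact (Complex.ofReal_sin _).symm
    have haim : a.im = 0 := by
      obtain ⟨y, hy⟩ := hrange (cosC u)
      rw [ha, ← hy]; simp [hcosy y]
    have hbim : b.im = 0 := by
      obtain ⟨y, hy⟩ := hrange (sinC u)
      rw [hb, ← hy]; simp [hsiny y]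
    have hare : a = ((a.re : ℝ) : ℂ) := Complex.ext (by simp) (by simp [haim])
    have hbre : b = ((b.re : ℝ) : ℂ) := Complex.ext (by simp) (by simp [hbim])
    have habs : a.re ^ 2 + b.re ^ 2 = 1 := by
      obtain ⟨y, hy⟩ := hrange (cosC u + Complex.I • sinC u)
      have hval : phi (cosC u + Complex.I • sinC u) = a + Complex.I * b := by
        rw [map_add, map_smul]; simp [ha, hb, smul_eq_mul]
      have hy' : a + Complex.I * b = Complex.exp (((u y).re : ℂ) * Complex.I) := by
        rw [← hval, ← hy]
        simp only [ContinuousMap.add_apply, ContinuousMap.smul_apply, cosC_apply, sinC_apply,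
          smul_eq_mul, Complex.exp_mul_I, ← hureal y]
        ring
      have habs1 : ‖a + Complex.I * b‖ = 1 := by
        rw [hy', Complex.norm_exp_ofReal_mul_I]
      have h2 := congrArg (· ^ 2) habs1
      have h2 : ‖a + Complex.I * b‖ ^ 2 = 1 ^ 2 := h2
      rw [Complex.sq_norm, Complex.normSq_apply] at h2
      simp only [Complex.add_re, Complex.add_im, Complex.mul_re, Complex.mul_im, Complex.I_re,
        Complex.I_im, haim, hbim] at h2
      nlinarith [h2]
    have habsC : a ^ 2 + b ^ 2 = 1 := by
      rw [hare, hbre]; exact_mod_cast habs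
    -- the witness function
    set w : C(X, ℂ) := (cosC u - a • 1) ^ 2 + (sinC u - b • 1) ^ 2 with hw
    have hphiw : phi w = 0 := by
      have hexp : w = (1 : C(X, ℂ)) + (a ^ 2 + b ^ 2) • 1 - (2 * a) • cosC u - (2 * b) • sinC u := by
        ext y
        simp only [hw, ContinuousMap.add_apply, ContinuousMap.sub_apply, ContinuousMap.pow_apply,
          ContinuousMap.smul_apply, ContinuousMap.one_apply, cosC_apply, sinC_apply, smul_eq_mul,
          mul_one]
        have hpy := Complex.sin_sq_add_cos_sq (u y)
        ring_nf
        linear_combination hpy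
      rw [hexp, map_sub, map_sub, map_add, map_smul, map_smul, map_smul, h1, ← ha, ← hb]
      simp only [smul_eq_mul, mul_one]
      linear_combination -habsC
    have hwy : ∀ y, w y =
        (((Real.cos (u y).re - a.re) ^ 2 + (Real.sin (u y).re - b.re) ^ 2 : ℝ) : ℂ) := by
      intro y
      simp only [hw, ContinuousMap.add_apply, ContinuousMap.sub_apply, ContinuousMap.pow_apply,
        ContinuousMap.smul_apply, ContinuousMap.one_apply, cosC_apply, sinC_apply, smul_eq_mul,
        mul_one]
      rw [hcosy y, hsiny y]
      conv_lhs => rw [hare, hbre]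
      push_cast
      ring
    have hwx : w x = 0 := by
      refine hxZ w ⟨hphiw, fun y => ?_⟩
      rw [hwy y]
      refine ⟨Complex.ofReal_im _, ?_⟩
      rw [Complex.ofReal_re]
      positivity
    have h0 : (Real.cos (u x).re - a.re) ^ 2 + (Real.sin (u x).re - b.re) ^ 2 = 0 := by
      have h := (hwy x).symm.trans hwx
      exact_mod_cast h
    have hcx : Real.cos (u x).re = a.re := by nlinarith [sq_nonneg (Real.cos (u x).re - a.re), sq_nonneg (Real.sin (u x).re - b.re)]
    have hsx : Real.sin (u x).re = b.re := by nlinarith [sq_nonneg (Real.cos (u x).re - a.re), sq_nonneg (Real.sin (u x).re - b.re)]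
    constructor
    · rw [hcosy x, hcx, ← hare]
    · rw [hsiny x, hsx, ← hbre]
  have keysin : ∀ u : C(X, ℂ), (∀ y, (u y).im = 0) → Complex.sin (u x) = phi (sinC u) :=
    fun u hu => (key u hu).2
  have hreal : ∀ f : C(X, ℂ), (∀ y, (f y).im = 0) → phi f = f x := by
    intro f hf
    set M : ℝ := ‖f‖ + 1 with hM
    have hM0 : 0 < M := by have := norm_nonneg f; linarith
    have hfy : ∀ y, |(f y).re| ≤ ‖f‖ := by
      intro y
      calc |(f y).re| ≤ ‖f y‖ := Complex.abs_re_le_norm _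
        _ = ‖f y‖ := rfl
        _ ≤ ‖f‖ := f.norm_coe_le_norm y
    have hpim : (phi f).im = 0 := by
      obtain ⟨y, hy⟩ := hrange f; rw [← hy]; exact hf y
    set p : ℝ := (phi f).re with hp
    have main : ∀ t : ℝ, 0 < t → t * M ≤ 1 →
        t * |(f x).re - p| ≤ (1 + ‖phi‖) * M ^ 3 * t ^ 3 := by
      intro t ht htM
      set g : C(X, ℂ) := (t : ℂ) • f with hg
      have hgy : ∀ y, g y = ((t * (f y).re : ℝ) : ℂ) := by
        intro y
        simp only [hg, ContinuousMap.smul_apply, smul_eq_mul]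
        exact Complex.ext (by simp) (by simp [hf y])
      have hgim : ∀ y, (g y).im = 0 := fun y => by rw [hgy y]; simp
      have hkey := keysin g hgim
      -- the difference function
      set d : C(X, ℂ) := sinC g - g with hd
      have hdphi : phi d = Complex.sin (g x) - (t : ℂ) * phi f := by
        rw [hd, map_sub, ← hkey, hg, map_smul, smul_eq_mul]
      have hsmall : ∀ s : ℝ, |s| ≤ t * ‖f‖ → |Real.sin s - s| ≤ t ^ 3 * M ^ 3 := by
        intro s hs
        have hs1 : |s| ≤ 1 := le_trans hs (le_trans (by nlinarith [norm_nonneg f]) htM)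
        calc |Real.sin s - s| ≤ |s| ^ 3 := sin_sub_self_bound hs1
          _ ≤ (t * M) ^ 3 := by
              have : |s| ≤ t * M := le_trans hs (by nlinarith [norm_nonneg f])
              exact pow_le_pow_left₀ (abs_nonneg s) this 3
          _ = t ^ 3 * M ^ 3 := by ring
      have hdnorm : ‖d‖ ≤ t ^ 3 * M ^ 3 := by
          refine (ContinuousMap.norm_le _ (by positivity)).mpr fun y => ?_
          have : d y = ((Real.sin (t * (f y).re) - t * (f y).re : ℝ) : ℂ) := by
            simp only [hd, ContinuousMap.sub_apply, sinC_apply, hgy y, Complex.ofReal_sin]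
            push_cast; ring
          rw [this]
          rw [Complex.norm_real, Real.norm_eq_abs]
          refine hsmall _ ?_
          rw [abs_mul, abs_of_pos ht]
          exact mul_le_mul_of_nonneg_left (hfy y) ht.le
      have hphid : |(phi d).re| ≤ ‖phi‖ * (t ^ 3 * M ^ 3) := by
          calc |(phi d).re| ≤ ‖phi d‖ := Complex.abs_re_le_norm _
            _ = ‖phi d‖ := rfl
            _ ≤ ‖phi‖ * ‖d‖ := phi.le_opNorm d
            _ ≤ ‖phi‖ * (t ^ 3 * M ^ 3) := mul_le_mul_of_nonneg_left hdnorm (norm_nonneg phi)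
      have hdre : (phi d).re = Real.sin (t * (f x).re) - t * p := by
          rw [hdphi]
          have hsg : Complex.sin (g x) = ((Real.sin (t * (f x).re) : ℝ) : ℂ) := by
            rw [hgy x, Complex.ofReal_sin]
          rw [hsg, Complex.sub_re, Complex.ofReal_re, Complex.mul_re, Complex.ofReal_re,
            Complex.ofReal_im, hpim, hp]
          ring
      have hsinx : |Real.sin (t * (f x).re) - t * (f x).re| ≤ t ^ 3 * M ^ 3 := by
          refine hsmall _ ?_
          rw [abs_mul, abs_of_pos ht]
          exact mul_le_mul_of_nonneg_left (hfy x) ht.le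
      calc t * |(f x).re - p| = |t * (f x).re - t * p| := by
            rw [← mul_sub, abs_mul, abs_of_pos ht]
          _ ≤ |t * (f x).re - Real.sin (t * (f x).re)| + |Real.sin (t * (f x).re) - t * p| := by
              exact abs_sub_le _ (Real.sin (t * (f x).re)) _
          _ ≤ t ^ 3 * M ^ 3 + ‖phi‖ * (t ^ 3 * M ^ 3) := by
              refine add_le_add ?_ ?_
              · rw [abs_sub_comm]; exact hsinx
              · rw [← hdre]; exact hphid
          _ = (1 + ‖phi‖) * M ^ 3 * t ^ 3 := by ring
    -- conclude
    have hc0 : |(f x).re - p| = 0 := by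
      by_contra hc
      set c := |(f x).re - p| with hcdef
      have hcpos : 0 < c := lt_of_le_of_ne (abs_nonneg _) (Ne.symm hc)
      set K := (1 + ‖phi‖) * M ^ 3 with hK
      have hK0 : 0 < K := by positivity
      set L := K / M with hL
      have hL0 : 0 < L := by positivity
      set t0 := min (1 / M) (c / (2 * L)) with ht0
      have ht0pos : 0 < t0 := lt_min (by positivity) (by positivity)
      have ht0M : t0 * M ≤ 1 := by
        have : t0 ≤ 1 / M := min_le_left _ _
        calc t0 * M ≤ (1 / M) * M := by nlinarith
          _ = 1 := by field_simp
      have h1 := main t0 ht0pos ht0M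
      have ht0le : t0 ≤ 1 / M := min_le_left _ _
      have ht0le2 : t0 ≤ c / (2 * L) := min_le_right _ _
      -- c ≤ K * t0^2 ≤ K * t0 / M = L * t0 ≤ c/2
      have hcle : t0 * c ≤ K * t0 ^ 3 := h1
      have h2 : c ≤ K * t0 ^ 2 := by nlinarith
      have h3 : K * t0 ^ 2 ≤ L * t0 := by
        have ht2 : t0 ^ 2 ≤ t0 * (1 / M) := by nlinarith
        calc K * t0 ^ 2 ≤ K * (t0 * (1 / M)) := by nlinarith
          _ = L * t0 := by rw [hL]; field_simp
      have h4 : L * t0 ≤ c / 2 := by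
        calc L * t0 ≤ L * (c / (2 * L)) := by nlinarith
          _ = c / 2 := by field_simp
      linarith
    have hre : (f x).re = p := by
      have := abs_eq_zero.mp hc0; linarith
    exact Complex.ext hre.symm (by rw [hpim, hf x])
  have hev : ∀ f : C(X, ℂ), phi f = f x := by
    intro f
    set u : C(X, ℂ) := (2⁻¹ : ℂ) • (f + star f) with hu
    set v : C(X, ℂ) := (-(Complex.I) / 2) • (f - star f) with hv
    have huy : ∀ y, u y = (((f y).re : ℝ) : ℂ) := by
      intro y
      simp only [hu, ContinuousMap.smul_apply, ContinuousMap.add_apply,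
        ContinuousMap.star_apply, smul_eq_mul]
      rw [Complex.star_def, Complex.add_conj]
      push_cast
      ring
    have hvy : ∀ y, v y = (((f y).im : ℝ) : ℂ) := by
      intro y
      simp only [hv, ContinuousMap.smul_apply, ContinuousMap.sub_apply,
        ContinuousMap.star_apply, smul_eq_mul]
      rw [Complex.star_def, Complex.sub_conj]
      push_cast
      linear_combination (-(((f y).im : ℂ))) * Complex.I_sq
    have hfuv : f = u + Complex.I • v := by
      ext y
      simp only [ContinuousMap.add_apply, ContinuousMap.smul_apply, smul_eq_mul, huy y, hvy y]
      rw [mul_comm]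
      exact (Complex.re_add_im (f y)).symm
    have hphiu := hreal u (fun y => by rw [huy y]; simp)
    have hphiv := hreal v (fun y => by rw [hvy y]; simp)
    calc phi f = phi (u + Complex.I • v) := by rw [← hfuv]
      _ = phi u + Complex.I * phi v := by rw [map_add, map_smul]; simp
      _ = u x + Complex.I * v x := by rw [hphiu, hphiv]
      _ = f x := by rw [hfuv]; simp
  refine ⟨fun f g => ?_, ⟨x, hev⟩⟩
  rw [hev f, hev g, hev (f * g), ContinuousMap.mul_apply]
end

section
/- Every Jordan *-isomorphism between unital C*-algebras is an isometry. -/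
section Aux

variable {A B : Type*} [CStarAlgebra A] [CStarAlgebra B]

lemma jmul (phi : A →ₗ[ℂ] B) (hsq : ∀ a : A, phi (a * a) = phi a * phi a) (a b : A) :
    phi (a * b + b * a) = phi a * phi b + phi b * phi a := by
  have h1 := hsq (a + b)
  have h2 := hsq a
  have h3 := hsq b
  have key : phi (a * b + b * a) = phi ((a + b) * (a + b)) - phi (a * a) - phi (b * b) := by
    rw [← map_sub, ← map_sub]; congr 1; noncomm_ring
  rw [key, h1, h2, h3, map_add]; noncomm_ring

lemma jdouble {M : Type*} [AddCommGroup M] [Module ℂ M] {x y : M} (h : x + x = y + y) :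
    x = y := by
  have : (2 : ℂ) • x = (2 : ℂ) • y := by rw [two_smul, two_smul]; exact h
  exact smul_right_injective M two_ne_zero this

lemma jtriple (phi : A →ₗ[ℂ] B) (hsq : ∀ a : A, phi (a * a) = phi a * phi a) (a b : A) :
    phi (a * b * a) = phi a * phi b * phi a := by
  apply jdouble
  have h1 := jmul phi hsq (a * b + b * a) a
  have h2 := jmul phi hsq (a * a) b
  have h3 := jmul phi hsq a b
  have key : phi (a * b * a) + phi (a * b * a) =
      phi ((a * b + b * a) * a + a * (a * b + b * a)) - phi (a * a * b + b * (a * a)) := by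
    rw [← map_add phi, ← map_sub]; congr 1; noncomm_ring
  rw [key, h1, h2, h3, hsq]
  noncomm_ring

lemma jone (phi : A →ₗ[ℂ] B) (hsurj : Function.Surjective phi)
    (hsq : ∀ a : A, phi (a * a) = phi a * phi a) : phi 1 = 1 := by
  set e : B := phi 1 with he
  have hee : e * e = e := by rw [he, ← hsq, one_mul]
  have hy : ∀ y : B, e * y + y * e = y + y := by
    intro y
    obtain ⟨x, rfl⟩ := hsurj y
    have h := jmul phi hsq 1 x
    simp only [one_mul, mul_one] at h
    rw [map_add] at h
    linear_combination (norm := noncomm_ring) h.symm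
  have hid : ∀ y : B, e * y = y := by
    intro y
    have h := hy y
    have h1 : e * y * e = e * y := by
      have h' := congrArg (fun z => e * z) h
      simp only [mul_add, ← mul_assoc, hee] at h'
      exact add_left_cancel h'
    have h2 : e * y * e = y * e := by
      have h' := congrArg (fun z => z * e) h
      simp only [add_mul, mul_assoc, hee] at h'
      rw [← mul_assoc] at h'
      exact add_right_cancel h'
    have hc : e * y = y * e := h1.symm.trans h2
    apply jdouble
    rw [hc] at h ⊢
    exact h
  have := hid 1
  rwa [mul_one] at this

lemma junit (phi : A →ₗ[ℂ] B) (hsurj : Function.Surjective phi)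
    (hsq : ∀ a : A, phi (a * a) = phi a * phi a) {a : A} (ha : IsUnit a) :
    IsUnit (phi a) := by
  obtain ⟨u, rfl⟩ := ha
  set b : A := ((u⁻¹ : Aˣ) : A) with hb
  have hab : (u : A) * b = 1 := u.mul_inv
  have hba : b * (u : A) = 1 := u.inv_mul
  have h1 : phi (u : A) * phi (b * b) * phi (u : A) = 1 := by
    rw [← jtriple phi hsq, show (u : A) * (b * b) * (u : A) = ((u : A) * b) * (b * (u : A)) by
      noncomm_ring, hab, hba, one_mul, jone phi hsurj hsq]
  have hcd : phi (u : A) * phi (b * b) = phi (b * b) * phi (u : A) := by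
    calc phi (u : A) * phi (b * b)
        = (phi (u : A) * phi (b * b)) * (phi (u : A) * (phi (b * b) * phi (u : A))) := by
          rw [show phi (u : A) * (phi (b * b) * phi (u : A)) = phi (u : A) * phi (b * b) * phi (u : A) by rw [mul_assoc], h1, mul_one]
      _ = (phi (u : A) * phi (b * b) * phi (u : A)) * (phi (b * b) * phi (u : A)) := by
          noncomm_ring
      _ = phi (b * b) * phi (u : A) := by rw [h1, one_mul]
  refine ⟨⟨phi (u : A), phi (b * b) * phi (u : A), ?_, ?_⟩, rfl⟩
  · rw [← mul_assoc]; exact h1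
  · rw [← hcd, mul_assoc]
    calc phi (u : A) * (phi (b * b) * phi (u : A)) = phi (u:A) * phi (b*b) * phi (u:A) := by
          rw [mul_assoc]
      _ = 1 := h1

lemma jspec (phi : A →ₗ[ℂ] B) (hsurj : Function.Surjective phi)
    (hsq : ∀ a : A, phi (a * a) = phi a * phi a) (a : A) :
    spectrum ℂ (phi a) ⊆ spectrum ℂ a := by
  intro z hz
  rw [spectrum.mem_iff] at hz ⊢
  intro hu
  apply hz
  have : phi (algebraMap ℂ A z - a) = algebraMap ℂ B z - phi a := by
    rw [map_sub, Algebra.algebraMap_eq_smul_one, Algebra.algebraMap_eq_smul_one,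
      map_smul, jone phi hsurj hsq]
  rw [← this]
  exact junit phi hsurj hsq hu

lemma jsa_norm (phi : A →ₗ[ℂ] B) (hsurj : Function.Surjective phi)
    (hsq : ∀ a : A, phi (a * a) = phi a * phi a)
    (hstar : ∀ a : A, phi (star a) = star (phi a))
    {h : A} (hh : IsSelfAdjoint h) : ‖phi h‖ ≤ ‖h‖ := by
  have hsa : IsSelfAdjoint (phi h) := by rw [IsSelfAdjoint, ← hstar, hh.star_eq]
  have hrad : spectralRadius ℂ (phi h) ≤ spectralRadius ℂ h := by
    rw [spectralRadius, spectralRadius]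
    refine iSup₂_le fun k hk => ?_
    exact le_iSup₂ (f := fun k (_ : k ∈ spectrum ℂ h) => (‖k‖₊ : ENNReal)) k
      (jspec phi hsurj hsq h hk)
  rw [hsa.spectralRadius_eq_nnnorm, hh.spectralRadius_eq_nnnorm, ENNReal.coe_le_coe] at hrad
  exact hrad

lemma jbound (phi : A →ₗ[ℂ] B) (hsurj : Function.Surjective phi)
    (hsq : ∀ a : A, phi (a * a) = phi a * phi a)
    (hstar : ∀ a : A, phi (star a) = star (phi a)) (a : A) :
    ‖phi a‖ ≤ 2 * ‖a‖ := by
  obtain ⟨h, hh⟩ : ∃ x : A, x = (2:ℂ)⁻¹ • (a + star a) := ⟨_, rfl⟩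
  obtain ⟨k, hk⟩ : ∃ x : A, x = (-(2:ℂ)⁻¹ * Complex.I) • (a - star a) := ⟨_, rfl⟩
  have hhsa : IsSelfAdjoint h := by
    rw [IsSelfAdjoint, hh, star_smul, star_add, star_star, add_comm (star a) a]
    congr 1
    simp
  have hksa : IsSelfAdjoint k := by
    rw [IsSelfAdjoint, hk, star_smul, star_sub, star_star]
    rw [show star (-(2:ℂ)⁻¹ * Complex.I) = -(-(2:ℂ)⁻¹ * Complex.I) by simp]
    rw [neg_smul, ← smul_neg, neg_sub]
  have hIc : Complex.I * (-(2:ℂ)⁻¹ * Complex.I) = (2:ℂ)⁻¹ := by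
    ring_nf
    simp [Complex.I_sq]
    norm_num
  have hdecomp : a = h + Complex.I • k := by
    rw [hh, hk, smul_smul, hIc, ← smul_add]
    rw [show a + star a + (a - star a) = (2 : ℂ) • a by rw [two_smul]; abel]
    rw [smul_smul]
    norm_num
  have hnh : ‖h‖ ≤ ‖a‖ := by
    rw [hh]
    calc ‖(2:ℂ)⁻¹ • (a + star a)‖ = ‖(2:ℂ)⁻¹‖ * ‖a + star a‖ := norm_smul _ _
      _ ≤ (1/2) * (‖a‖ + ‖star a‖) := by
          gcongr
          · norm_num
          · exact norm_add_le _ _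
      _ = ‖a‖ := by rw [norm_star]; ring
  have hnk : ‖k‖ ≤ ‖a‖ := by
    rw [hk]
    calc ‖(-(2:ℂ)⁻¹ * Complex.I) • (a - star a)‖
        = ‖(-(2:ℂ)⁻¹ * Complex.I)‖ * ‖a - star a‖ := norm_smul _ _
      _ ≤ (1/2) * (‖a‖ + ‖star a‖) := by
          gcongr
          · rw [norm_mul, norm_neg, norm_inv, Complex.norm_I]
            norm_num
          · exact norm_sub_le _ _
      _ = ‖a‖ := by rw [norm_star]; ring
  calc ‖phi a‖ = ‖phi h + Complex.I • phi k‖ := by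
        rw [hdecomp, map_add, map_smul]
    _ ≤ ‖phi h‖ + ‖Complex.I • phi k‖ := norm_add_le _ _
    _ = ‖phi h‖ + ‖phi k‖ := by rw [norm_smul, Complex.norm_I, one_mul]
    _ ≤ ‖h‖ + ‖k‖ := by
        gcongr
        · exact jsa_norm phi hsurj hsq hstar hhsa
        · exact jsa_norm phi hsurj hsq hstar hksa
    _ ≤ 2 * ‖a‖ := by linarith

lemma jcontr (phi : A →ₗ[ℂ] B) (hsurj : Function.Surjective phi)
    (hsq : ∀ a : A, phi (a * a) = phi a * phi a)
    (hstar : ∀ a : A, phi (star a) = star (phi a)) (a : A) :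
    ‖phi a‖ ≤ ‖a‖ := by
  rcases eq_or_ne a 0 with rfl | ha0
  · simp
  have hna : 0 < ‖a‖ := norm_pos_iff.mpr ha0
  -- define the iterated sequence
  set b : ℕ → A := fun n => Nat.rec a (fun _ bn => bn * star a * bn) n with hbdef
  have hb0 : b 0 = a := rfl
  have hbs : ∀ n, b (n + 1) = b n * star a * b n := fun n => rfl
  set p : B := phi (star a) * phi a with hp
  have hpsa : IsSelfAdjoint p := by
    rw [hp, hstar]
    exact IsSelfAdjoint.star_mul_self (phi a)
  -- claim 1 : phi (star a) * phi (b n) = p ^ (2 ^ n)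
  have hc1 : ∀ n, phi (star a) * phi (b n) = p ^ (2 ^ n) := by
    intro n
    induction n with
    | zero => simp [hb0, hp]
    | succ n ih =>
      rw [hbs, jtriple phi hsq]
      calc phi (star a) * (phi (b n) * phi (star a) * phi (b n))
          = (phi (star a) * phi (b n)) * (phi (star a) * phi (b n)) := by noncomm_ring
        _ = p ^ (2 ^ n) * p ^ (2 ^ n) := by rw [ih]
        _ = p ^ (2 ^ (n + 1)) := by rw [← pow_add]; ring_nf
  -- claim 2 : ‖a‖ * ‖b n‖ ≤ ‖a‖ ^ (2 ^ (n+1))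
  have hc2 : ∀ n, ‖a‖ * ‖b n‖ ≤ ‖a‖ ^ (2 ^ (n + 1)) := by
    intro n
    induction n with
    | zero => rw [hb0]; norm_num [pow_two]
    | succ n ih =>
      rw [hbs]
      calc ‖a‖ * ‖b n * star a * b n‖ ≤ ‖a‖ * (‖b n‖ * ‖star a‖ * ‖b n‖) := by
            gcongr
            exact (norm_mul_le _ _).trans (by gcongr; exact norm_mul_le _ _)
        _ = (‖a‖ * ‖b n‖) * (‖a‖ * ‖b n‖) := by rw [norm_star]; ring
        _ ≤ ‖a‖ ^ (2 ^ (n + 1)) * ‖a‖ ^ (2 ^ (n + 1)) := by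
            have h0 : 0 ≤ ‖a‖ * ‖b n‖ := by positivity
            exact mul_le_mul ih ih h0 (by positivity)
        _ = ‖a‖ ^ (2 ^ (n + 2)) := by rw [← pow_add]; ring_nf
  -- norm of powers of p
  have hpnorm : ∀ n, ‖p ^ (2 ^ n)‖ = ‖p‖ ^ (2 ^ n) := by
    intro n
    induction n with
    | zero => simp
    | succ n ih =>
      have hsa' : IsSelfAdjoint (p ^ (2 ^ n)) := hpsa.pow _
      calc ‖p ^ (2 ^ (n+1))‖ = ‖p ^ (2 ^ n) * p ^ (2 ^ n)‖ := by rw [← pow_add]; ring_nf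
        _ = ‖star (p ^ (2 ^ n)) * p ^ (2 ^ n)‖ := by rw [hsa'.star_eq]
        _ = ‖p ^ (2 ^ n)‖ * ‖p ^ (2 ^ n)‖ := CStarRing.norm_star_mul_self
        _ = ‖p‖ ^ (2 ^ (n+1)) := by rw [ih, ← pow_add]; ring_nf
  have hpa : ‖p‖ = ‖phi a‖ ^ 2 := by
    rw [hp, hstar, CStarRing.norm_star_mul_self, pow_two]
  -- the key bound
  have hkey : ∀ n, ‖phi a‖ ^ (2 ^ (n + 1)) ≤ 4 * ‖a‖ ^ (2 ^ (n + 1)) := by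
    intro n
    calc ‖phi a‖ ^ (2 ^ (n + 1)) = (‖phi a‖ ^ 2) ^ (2 ^ n) := by
          rw [← pow_mul]; ring_nf
      _ = ‖p ^ (2 ^ n)‖ := by rw [← hpa, hpnorm]
      _ = ‖phi (star a) * phi (b n)‖ := by rw [hc1]
      _ ≤ ‖phi (star a)‖ * ‖phi (b n)‖ := norm_mul_le _ _
      _ ≤ (2 * ‖star a‖) * (2 * ‖b n‖) := by
          gcongr
          · exact jbound phi hsurj hsq hstar _
          · exact jbound phi hsurj hsq hstar _
      _ = 4 * (‖a‖ * ‖b n‖) := by rw [norm_star]; ring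
      _ ≤ 4 * ‖a‖ ^ (2 ^ (n + 1)) := by gcongr; exact hc2 n
  -- conclude
  by_contra hlt
  push_neg at hlt
  set t : ℝ := ‖phi a‖ / ‖a‖ with ht
  have ht1 : 1 < t := (one_lt_div hna).mpr hlt
  obtain ⟨m, hm⟩ := pow_unbounded_of_one_lt (4 : ℝ) ht1
  have hmle : m ≤ 2 ^ (m + 1) := (Nat.lt_two_pow_self (n := m)).le.trans (Nat.pow_le_pow_right (by norm_num) (by omega))
  have htm : t ^ m ≤ t ^ (2 ^ (m + 1)) := pow_le_pow_right₀ ht1.le hmle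
  have hbound : t ^ (2 ^ (m + 1)) ≤ 4 := by
    rw [ht, div_pow, div_le_iff₀ (by positivity)]
    exact hkey m
  linarith

end Aux

theorem stmt_13
    {A B : Type*} [CStarAlgebra A] [CStarAlgebra B]
    (phi : A →ₗ[ℂ] B) (hbij : Function.Bijective phi)
    (hsq : ∀ a : A, phi (a * a) = phi a * phi a)
    (hstar : ∀ a : A, phi (star a) = star (phi a)) :
    ∀ a : A, ‖phi a‖ = ‖a‖ := by
  intro a
  have h1 : ‖phi a‖ ≤ ‖a‖ := jcontr phi hbij.2 hsq hstar a
  set e : A ≃ₗ[ℂ] B := LinearEquiv.ofBijective phi hbij with he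
  set psi : B →ₗ[ℂ] A := (e.symm : B →ₗ[ℂ] A) with hpsi
  have hpe : ∀ x : A, psi (phi x) = x := fun x => e.symm_apply_apply x
  have hep : ∀ y : B, phi (psi y) = y := fun y => e.apply_symm_apply y
  have hsq' : ∀ y : B, psi (y * y) = psi y * psi y := by
    intro y
    have : y * y = phi (psi y * psi y) := by rw [hsq, hep]
    rw [this, hpe]
  have hstar' : ∀ y : B, psi (star y) = star (psi y) := by
    intro y
    have : star y = phi (star (psi y)) := by rw [hstar, hep]
    rw [this, hpe]
  have h2 : ‖psi (phi a)‖ ≤ ‖phi a‖ := jcontr psi e.symm.bijective.2 hsq' hstar' (phi a)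
  rw [hpe] at h2
  exact le_antisymm h1 h2
end
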